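/- For an equivariant LR skew tableau L with B = L|_μ and Δ(a) = ω(L^u_{≤a})_{|a|} - c(a) + r(a): if Δ(a) ≤ 0 for some a ∈ B, then there exists a barred entry b ∈ B in the same row as a with Δ(b) = 0. -/

import Mathlib

open scoped Classical
open MvPolynomial

noncomputable section

namespace EqLR

/-- Ambient polynomial ring `ℂ[x_1,…,x_d ; y_i (i ∈ ℤ)]`.
The variables `x_j` are indexed by `Fin d` (so `x_{j+1} = X (Sum.inl j)`), and the
variables `y_i` are indexed by `ℤ` (only positive indices actually occur). -/
abbrev P (d : ℕ) := MvPolynomial (Fin d ⊕ ℤ) ℂ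

/-- The variable `y_i`. -/
def yI (d : ℕ) (i : ℤ) : P d := X (Sum.inr i)

/-- The variable `x_v` for a value `v ∈ {1,…,d}` (junk value `0` otherwise). -/
def xv (d : ℕ) (v : ℕ) : P d :=
  if h : v - 1 < d then X (Sum.inl ⟨v - 1, h⟩) else 0

/-- The component `ξ_v` of a vector `ξ ∈ ℕ^d`, for a (1-based) value `v ∈ {1,…,d}`. -/
def vecAt {d : ℕ} (ξ : Fin d → ℕ) (v : ℕ) : ℕ :=
  if h : v - 1 < d then ξ ⟨v - 1, h⟩ else 0

/-- `μ ∈ ℕ^d` is a partition:  `μ_1 ≥ μ_2 ≥ … ≥ μ_d`. -/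
def IsPartitionVec {d : ℕ} (μ : Fin d → ℕ) : Prop :=
  ∀ i j : Fin d, i ≤ j → μ j ≤ μ i

/-- `|μ| = μ_1 + ⋯ + μ_d`. -/
def wt {d : ℕ} (μ : Fin d → ℕ) : ℕ := ∑ i, μ i

/-- `ρ = (d-1, d-2, …, 0)`. -/
def rho (d : ℕ) : Fin d → ℕ := fun i => d - 1 - (i : ℕ)

/-- Cells `(r, c)` (both 0-based) of the Young/reverse Young diagram whose row `r` has
length `μ_{r+1}`.  For the reverse diagram, rows are numbered bottom-to-top and columns
right-to-left; for the ordinary Young diagram, top-to-bottom and left-to-right. -/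
def cells (d : ℕ) (μ : Fin d → ℕ) : Finset (ℕ × ℕ) :=
  (Finset.range d ×ˢ Finset.range (Finset.univ.sup μ + 1)).filter
    fun rc => ∃ h : rc.1 < d, rc.2 < μ ⟨rc.1, h⟩

/-- In the column reading word of a *reverse* diagram (columns right-to-left, i.e. in
increasing 0-based column index, each column read top-to-bottom, i.e. in decreasing
0-based row index), the cell `b` is read strictly before the cell `a`. -/
def revBefore (a b : ℕ × ℕ) : Prop := b.2 < a.2 ∨ (b.2 = a.2 ∧ a.1 < b.1)

/-- In the column reading word of an ordinary Young diagram (rightmost column first,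
each column read top-to-bottom), the cell `b` is read strictly before the cell `a`. -/
def youngBefore (a b : ℕ × ℕ) : Prop := a.2 < b.2 ∨ (b.2 = a.2 ∧ b.1 < a.1)

/-- A reverse tableau of shape `μ`: entries in `{1,…,d}`, weakly increasing along rows
(left to right) and strictly increasing down columns (top to bottom). -/
structure RevTableau (d : ℕ) (μ : Fin d → ℕ) where
  val : ℕ × ℕ → ℕ
  mem : ∀ a ∈ cells d μ, 1 ≤ val a ∧ val a ≤ d
  zero : ∀ a ∉ cells d μ, val a = 0
  row : ∀ r c : ℕ, (r, c + 1) ∈ cells d μ → val (r, c + 1) ≤ val (r, c)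
  col : ∀ r c : ℕ, (r + 1, c) ∈ cells d μ → val (r + 1, c) < val (r, c)

/-- The factor `x_v - y_{(d+1-v) + c(a) - r(a)}` attached to an entry of value `v` in
the cell `a` of the reverse diagram (`c(a) = a.2 + 1`, `r(a) = a.1 + 1`, 1-based). -/
def factor (d : ℕ) (v : ℕ) (a : ℕ × ℕ) : P d :=
  xv d v - yI d ((d : ℤ) + 1 - (v : ℤ) + (a.2 : ℤ) - (a.1 : ℤ))

/-- The factorial Schur function `s_μ(x|y) = Σ_R (x|y)^R`. -/
def fSchur (d : ℕ) (μ : Fin d → ℕ) : P d :=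
  ∑ᶠ R : RevTableau d μ, ∏ a ∈ cells d μ, factor d (R.val a) a

/-- The ordinary Schur function `s_μ(x) = Σ_R x^R`. -/
def schurX (d : ℕ) (μ : Fin d → ℕ) : P d :=
  ∑ᶠ R : RevTableau d μ, ∏ a ∈ cells d μ, xv d (R.val a)

/-- The subalgebra `ℂ[y]` of polynomials in the `y` variables only. -/
def ySub (d : ℕ) : Subalgebra ℂ (P d) :=
  Algebra.adjoin ℂ (Set.range fun i : ℤ => yI d i)

/-- `p` is symmetric in the `x` variables. -/
def SymmX {d : ℕ} (p : P d) : Prop :=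
  ∀ σ : Equiv.Perm (Fin d), rename (⇑(Equiv.sumCongr σ (Equiv.refl ℤ))) p = p

/-- The falling factorial power `(x_j | y)^k = (x_j - y_1)⋯(x_j - y_k)`. -/
def ffPow (d : ℕ) (j : Fin d) (k : ℕ) : P d :=
  ∏ i ∈ Finset.range k, (X (Sum.inl j) - yI d ((i : ℤ) + 1))

/-- `(x|y)^ξ = (x_1|y)^{ξ_1} ⋯ (x_d|y)^{ξ_d}`. -/
def xyPow (d : ℕ) (ξ : Fin d → ℕ) : P d := ∏ j : Fin d, ffPow d j (ξ j)

/-- The alternant `a_ξ(x|y) = det[(x_j|y)^{ξ_i}]`. -/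
def aDet (d : ℕ) (ξ : Fin d → ℕ) : P d :=
  Matrix.det (Matrix.of fun i j : Fin d => ffPow d j (ξ i))

/-! ### Skew barred tableaux of shape `λ*μ` -/

/-- A skew barred tableau of shape `λ*μ`: the Young diagram `λ` (placed above and to
the right of the reverse diagram `μ`) is filled with values in `{1,…,d}` (field `top`),
the reverse diagram `μ` is filled with values in `{1,…,d}` (field `bot`), some of whose
cells may be barred (field `barred`); values weakly increase along rows left-to-right
and strictly increase down columns, ignoring bars. -/
structure SkewBarredTableau (d : ℕ) (lam mu : Fin d → ℕ) where
  top : ℕ × ℕ → ℕ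
  bot : ℕ × ℕ → ℕ
  barred : ℕ × ℕ → Prop
  top_mem : ∀ a ∈ cells d lam, 1 ≤ top a ∧ top a ≤ d
  top_zero : ∀ a ∉ cells d lam, top a = 0
  bot_mem : ∀ a ∈ cells d mu, 1 ≤ bot a ∧ bot a ≤ d
  bot_zero : ∀ a ∉ cells d mu, bot a = 0
  barred_sub : ∀ a, barred a → a ∈ cells d mu
  top_row : ∀ r c : ℕ, (r, c + 1) ∈ cells d lam → top (r, c) ≤ top (r, c + 1)
  top_col : ∀ r c : ℕ, (r + 1, c) ∈ cells d lam → top (r, c) < top (r + 1, c)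
  bot_row : ∀ r c : ℕ, (r, c + 1) ∈ cells d mu → bot (r, c + 1) ≤ bot (r, c)
  bot_col : ∀ r c : ℕ, (r + 1, c) ∈ cells d mu → bot (r + 1, c) < bot (r, c)

namespace SkewBarredTableau

variable {d : ℕ} {lam mu : Fin d → ℕ}

/-- `ω(L^u_{<a})_k`: the number of `k`'s among the unbarred entries of `L` read strictly
before the `μ`-cell `a` in the unbarred column word (all of `λ` is read before `μ`). -/
def countBefore (L : SkewBarredTableau d lam mu) (a : ℕ × ℕ) (k : ℕ) : ℕ :=
  ((cells d lam).filter fun b => L.top b = k).card +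
  ((cells d mu).filter fun b => ¬ L.barred b ∧ L.bot b = k ∧ revBefore a b).card

/-- `ω(L^u_{≤a})_k`: as `countBefore`, but the entry of `a` itself is also counted when
`a` is unbarred. -/
def countUpTo (L : SkewBarredTableau d lam mu) (a : ℕ × ℕ) (k : ℕ) : ℕ :=
  ((cells d lam).filter fun b => L.top b = k).card +
  ((cells d mu).filter fun b => ¬ L.barred b ∧ L.bot b = k ∧ (revBefore a b ∨ b = a)).card

/-- Prefix content within the `λ`-part of the word. -/
def topCountUpTo (L : SkewBarredTableau d lam mu) (a : ℕ × ℕ) (k : ℕ) : ℕ :=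
  ((cells d lam).filter fun b => L.top b = k ∧ (youngBefore a b ∨ b = a)).card

/-- `ω(L^u)_k`: total content of the unbarred column word of `L`. -/
def content (L : SkewBarredTableau d lam mu) (k : ℕ) : ℕ :=
  ((cells d lam).filter fun b => L.top b = k).card +
  ((cells d mu).filter fun b => ¬ L.barred b ∧ L.bot b = k).card

/-- The unbarred column word of `L` is Yamanouchi: every prefix contains at least as
many `k`'s as `(k+1)`'s, for every `k ≥ 1`. -/
def Yamanouchi (L : SkewBarredTableau d lam mu) : Prop :=
  (∀ a ∈ cells d lam, ∀ k : ℕ, 1 ≤ k → L.topCountUpTo a (k + 1) ≤ L.topCountUpTo a k) ∧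
  (∀ a ∈ cells d mu, ¬ L.barred a → ∀ k : ℕ, 1 ≤ k →
      L.countUpTo a (k + 1) ≤ L.countUpTo a k)

/-- `L` is an equivariant Littlewood–Richardson skew tableau of shape `λ*μ` and unbarred
content `ν`. -/
def IsLR (L : SkewBarredTableau d lam mu) (ν : Fin d → ℕ) : Prop :=
  L.Yamanouchi ∧ ∀ i : Fin d, L.content ((i : ℕ) + 1) = ν i

/-- The index `|a|' + ω(L^u_{<a})_{|a|}` of the first `y` in the factor of `c_L` at a
barred cell `a`. -/
def eIdx (L : SkewBarredTableau d lam mu) (a : ℕ × ℕ) : ℤ :=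
  ((d : ℤ) + 1 - (L.bot a : ℤ)) + (L.countBefore a (L.bot a) : ℤ)

/-- The index `|a|' + c(a) - r(a)` of the second `y` in the factor of `c_L` at a barred
cell `a`. -/
def fIdx (L : SkewBarredTableau d lam mu) (a : ℕ × ℕ) : ℤ :=
  ((d : ℤ) + 1 - (L.bot a : ℤ)) + (a.2 : ℤ) - (a.1 : ℤ)

/-- The weight `c_L = ∏_{a barred} (y_{|a|'+ω(L^u_{<a})_{|a|}} - y_{|a|'+c(a)-r(a)})`. -/
def cWt (L : SkewBarredTableau d lam mu) : P d :=
  ∏ a ∈ (cells d mu).filter (fun a => L.barred a), (yI d (L.eIdx a) - yI d (L.fIdx a))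

/-- `Δ(a) = ω(L^u_{≤a})_{|a|} - c(a) + r(a)`. -/
def Δ (L : SkewBarredTableau d lam mu) (a : ℕ × ℕ) : ℤ :=
  (L.countUpTo a (L.bot a) : ℤ) - ((a.2 : ℤ) + 1) + ((a.1 : ℤ) + 1)

end SkewBarredTableau

/-! ### Reverse barred tableaux -/

/-- A reverse barred tableau of shape `μ`. -/
structure RevBarredTableau (d : ℕ) (μ : Fin d → ℕ) where
  val : ℕ × ℕ → ℕ
  barred : ℕ × ℕ → Prop
  mem : ∀ a ∈ cells d μ, 1 ≤ val a ∧ val a ≤ d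
  zero : ∀ a ∉ cells d μ, val a = 0
  barred_sub : ∀ a, barred a → a ∈ cells d μ
  row : ∀ r c : ℕ, (r, c + 1) ∈ cells d μ → val (r, c + 1) ≤ val (r, c)
  col : ∀ r c : ℕ, (r + 1, c) ∈ cells d μ → val (r + 1, c) < val (r, c)

namespace RevBarredTableau

variable {d : ℕ} {μ : Fin d → ℕ}

/-- `ω(B^u_{<a})_k`. -/
def countBefore (B : RevBarredTableau d μ) (a : ℕ × ℕ) (k : ℕ) : ℕ :=
  ((cells d μ).filter fun b => ¬ B.barred b ∧ B.val b = k ∧ revBefore a b).card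

/-- `ω(B^u_{≤a})_k` (including `a` itself when unbarred). -/
def countUpTo (B : RevBarredTableau d μ) (a : ℕ × ℕ) (k : ℕ) : ℕ :=
  ((cells d μ).filter fun b => ¬ B.barred b ∧ B.val b = k ∧ (revBefore a b ∨ b = a)).card

/-- `ω(B^u)_k`. -/
def content (B : RevBarredTableau d μ) (k : ℕ) : ℕ :=
  ((cells d μ).filter fun b => ¬ B.barred b ∧ B.val b = k).card

/-- `e_{ξ,B}(a) = (ξ + ω(B^u_{<a}))_{|a|}`. -/
def eIdx (B : RevBarredTableau d μ) (ξ : Fin d → ℕ) (a : ℕ × ℕ) : ℤ :=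
  (vecAt ξ (B.val a) : ℤ) + (B.countBefore a (B.val a) : ℤ)

/-- `f_B(a) = |a|' + c(a) - r(a)`. -/
def fIdx (B : RevBarredTableau d μ) (a : ℕ × ℕ) : ℤ :=
  ((d : ℤ) + 1 - (B.val a : ℤ)) + (a.2 : ℤ) - (a.1 : ℤ)

/-- `c_{ξ,B} = ∏_{a barred} (y_{e_{ξ,B}(a)} - y_{f_B(a)})`. -/
def cXi (B : RevBarredTableau d μ) (ξ : Fin d → ℕ) : P d :=
  ∏ a ∈ (cells d μ).filter (fun a => B.barred a), (yI d (B.eIdx ξ a) - yI d (B.fIdx a))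

/-- The unbarred column word of `λ*B` is Yamanouchi (the `λ`-part is the canonical
filling of `λ`, whose whole content `λ` is added to every prefix of `B^u`). -/
def StarYam (B : RevBarredTableau d μ) (lam : Fin d → ℕ) : Prop :=
  ∀ a ∈ cells d μ, ¬ B.barred a → ∀ k : ℕ, 1 ≤ k →
    vecAt lam (k + 1) + B.countUpTo a (k + 1) ≤ vecAt lam k + B.countUpTo a k

end RevBarredTableau

/-! ### Reverse hatted tableaux -/

/-- A hat decoration: none, left hat, or right hat. -/
inductive Hat where
  | unhatted : Hat
  | left : Hat
  | right : Hat
deriving DecidableEq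

/-- A reverse hatted tableau of shape `μ`. -/
structure RevHattedTableau (d : ℕ) (μ : Fin d → ℕ) where
  val : ℕ × ℕ → ℕ
  hat : ℕ × ℕ → Hat
  mem : ∀ a ∈ cells d μ, 1 ≤ val a ∧ val a ≤ d
  zero : ∀ a ∉ cells d μ, val a = 0
  hat_out : ∀ a ∉ cells d μ, hat a = Hat.unhatted
  row : ∀ r c : ℕ, (r, c + 1) ∈ cells d μ → val (r, c + 1) ≤ val (r, c)
  col : ∀ r c : ℕ, (r + 1, c) ∈ cells d μ → val (r + 1, c) < val (r, c)

namespace RevHattedTableau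

variable {d : ℕ} {μ : Fin d → ℕ}

/-- `ω(H^u_{<a})_k`: content of the unhatted column word of `H` read before `a`. -/
def countBefore (H : RevHattedTableau d μ) (a : ℕ × ℕ) (k : ℕ) : ℕ :=
  ((cells d μ).filter fun b => H.hat b = Hat.unhatted ∧ H.val b = k ∧ revBefore a b).card

/-- `ω(H^u)_k`. -/
def content (H : RevHattedTableau d μ) (k : ℕ) : ℕ :=
  ((cells d μ).filter fun b => H.hat b = Hat.unhatted ∧ H.val b = k).card

/-- `e_{ξ,H}(a) = (ξ + ω(H^u_{<a}))_{|a|}`. -/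
def eIdx (H : RevHattedTableau d μ) (ξ : Fin d → ℕ) (a : ℕ × ℕ) : ℤ :=
  (vecAt ξ (H.val a) : ℤ) + (H.countBefore a (H.val a) : ℤ)

/-- `f_H(a) = |a|' + c(a) - r(a)`. -/
def fIdx (H : RevHattedTableau d μ) (a : ℕ × ℕ) : ℤ :=
  ((d : ℤ) + 1 - (H.val a : ℤ)) + (a.2 : ℤ) - (a.1 : ℤ)

/-- `d_{ξ,H} = ∏_{a ∈ H^l} y_{e_{ξ,H}(a)} · ∏_{a ∈ H^r} (-y_{f_H(a)})`. -/
def dWt (H : RevHattedTableau d μ) (ξ : Fin d → ℕ) : P d :=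
  (∏ a ∈ (cells d μ).filter (fun a => H.hat a = Hat.left), yI d (H.eIdx ξ a)) *
  ∏ a ∈ (cells d μ).filter (fun a => H.hat a = Hat.right), (-(yI d (H.fIdx a)))

end RevHattedTableau

/-- `H̄ = B`: `H` unbars to the reverse barred tableau `B`. -/
def UnbarsTo {d : ℕ} {μ : Fin d → ℕ} (H : RevHattedTableau d μ)
    (B : RevBarredTableau d μ) : Prop :=
  H.val = B.val ∧ ∀ a, (H.hat a ≠ Hat.unhatted ↔ B.barred a)

/-- The simple transposition `σ_i` on values: exchanges `i` and `i+1`. -/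
def swapVal (i v : ℕ) : ℕ := if v = i then i + 1 else if v = i + 1 then i else v

/-- The action of `σ_i` on `ℕ^d` by permuting coordinates. -/
def swapVec {d : ℕ} (i : ℕ) (ξ : Fin d → ℕ) : Fin d → ℕ :=
  fun j => vecAt ξ (swapVal i ((j : ℕ) + 1))

/-! ### Reverse (barred) subtableaux -/

/-- A reverse subtableau of shape `μ`: each cell is empty (value `0`) or carries a value
in `{1,…,d}`; no row or column conditions. -/
structure RevSubTableau (d : ℕ) (μ : Fin d → ℕ) where
  val : ℕ × ℕ → ℕ
  mem : ∀ a ∈ cells d μ, val a ≤ d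
  zero : ∀ a ∉ cells d μ, val a = 0

/-- A reverse barred subtableau of shape `μ`: a reverse subtableau some of whose filled
cells are barred. -/
structure RevBarredSubTableau (d : ℕ) (μ : Fin d → ℕ) where
  val : ℕ × ℕ → ℕ
  barred : ℕ × ℕ → Prop
  mem : ∀ a ∈ cells d μ, val a ≤ d
  zero : ∀ a ∉ cells d μ, val a = 0
  barred_filled : ∀ a, barred a → a ∈ cells d μ ∧ val a ≠ 0

/-- `(x|y)^R` for a reverse subtableau `R`. -/
def RevSubTableau.xyProd {d : ℕ} {μ : Fin d → ℕ} (R : RevSubTableau d μ) : P d :=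
  ∏ a ∈ (cells d μ).filter (fun a => R.val a ≠ 0), factor d (R.val a) a

namespace RevBarredSubTableau

variable {d : ℕ} {μ : Fin d → ℕ}

/-- `ω(B^u_{<a})_k`: unbarred filled entries of value `k` read before `a`. -/
def countBefore (B : RevBarredSubTableau d μ) (a : ℕ × ℕ) (k : ℕ) : ℕ :=
  ((cells d μ).filter fun b => ¬ B.barred b ∧ B.val b = k ∧ revBefore a b).card

/-- `ω(B^u)_k`. -/
def content (B : RevBarredSubTableau d μ) (k : ℕ) : ℕ :=
  ((cells d μ).filter fun b => ¬ B.barred b ∧ B.val b = k).card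

/-- `e_{ξ,B}(a) = (ξ + ω(B^u_{<a}))_{|a|}`. -/
def eIdx (B : RevBarredSubTableau d μ) (ξ : Fin d → ℕ) (a : ℕ × ℕ) : ℤ :=
  (vecAt ξ (B.val a) : ℤ) + (B.countBefore a (B.val a) : ℤ)

/-- `f_B(a) = |a|' + c(a) - r(a)`. -/
def fIdx (B : RevBarredSubTableau d μ) (a : ℕ × ℕ) : ℤ :=
  ((d : ℤ) + 1 - (B.val a : ℤ)) + (a.2 : ℤ) - (a.1 : ℤ)

/-- `c_{ξ,B}`. -/
def cXi (B : RevBarredSubTableau d μ) (ξ : Fin d → ℕ) : P d :=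
  ∏ a ∈ (cells d μ).filter (fun a => B.barred a), (yI d (B.eIdx ξ a) - yI d (B.fIdx a))

end RevBarredSubTableau

end EqLR

namespace EqLR

/-! ### Auxiliary lemmas for Statement 9 -/

lemma mem_cells {d : ℕ} {μ : Fin d → ℕ} {a : ℕ × ℕ} :
    a ∈ cells d μ ↔ ∃ h : a.1 < d, a.2 < μ ⟨a.1, h⟩ := by
  constructor
  · intro h
    exact (Finset.mem_filter.mp h).2
  · rintro ⟨h1, h2⟩
    refine Finset.mem_filter.mpr ⟨Finset.mem_product.mpr
      ⟨Finset.mem_range.mpr h1, Finset.mem_range.mpr ?_⟩, h1, h2⟩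
    exact Nat.lt_succ_of_lt (lt_of_lt_of_le h2 (Finset.le_sup (Finset.mem_univ _)))

lemma cells_left {d : ℕ} {μ : Fin d → ℕ} {r c : ℕ} (h : (r, c + 1) ∈ cells d μ) :
    (r, c) ∈ cells d μ := by
  obtain ⟨h1, h2⟩ := mem_cells.mp h
  exact mem_cells.mpr ⟨h1, Nat.lt_of_succ_lt h2⟩

lemma cells_up {d : ℕ} {μ : Fin d → ℕ} (hmu : IsPartitionVec μ) {r1 r2 c : ℕ}
    (h12 : r1 ≤ r2) (h : (r2, c) ∈ cells d μ) : (r1, c) ∈ cells d μ := by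
  obtain ⟨h1, h2⟩ := mem_cells.mp h
  have h1' : r1 < d := lt_of_le_of_lt h12 h1
  exact mem_cells.mpr ⟨h1', lt_of_lt_of_le h2 (hmu ⟨r1, h1'⟩ ⟨r2, h1⟩ h12)⟩

lemma bot_lt_of_row_lt {d : ℕ} {lam mu : Fin d → ℕ} (hmu : IsPartitionVec mu)
    (L : SkewBarredTableau d lam mu) {r1 r2 c : ℕ} (h12 : r1 < r2)
    (h : (r2, c) ∈ cells d mu) : L.bot (r2, c) < L.bot (r1, c) := by
  induction r2, h12 using Nat.le_induction with
  | base => exact L.bot_col r1 c h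
  | succ n hn ih =>
      have hn' : (n, c) ∈ cells d mu := cells_up hmu (Nat.le_succ n) h
      exact lt_trans (L.bot_col n c h) (ih hn')

lemma revBefore_trans {x y z : ℕ × ℕ} (h1 : revBefore x y) (h2 : revBefore y z) :
    revBefore x z := by
  unfold revBefore at *
  omega

lemma one_le_countUpTo {d : ℕ} {lam mu : Fin d → ℕ} (L : SkewBarredTableau d lam mu)
    {a : ℕ × ℕ} (ha : a ∈ cells d mu) (hnb : ¬ L.barred a) :
    1 ≤ L.countUpTo a (L.bot a) := by
  unfold SkewBarredTableau.countUpTo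
  have hmem : a ∈ (cells d mu).filter
      (fun b => ¬ L.barred b ∧ L.bot b = L.bot a ∧ (revBefore a b ∨ b = a)) :=
    Finset.mem_filter.mpr ⟨ha, hnb, rfl, Or.inr rfl⟩
  have := Finset.card_pos.mpr ⟨a, hmem⟩
  omega

lemma top_content_anti {d : ℕ} {lam mu : Fin d → ℕ} (L : SkewBarredTableau d lam mu)
    (hY : L.Yamanouchi) {k : ℕ} (hk : 1 ≤ k) :
    ((cells d lam).filter fun b => L.top b = k + 1).card ≤
      ((cells d lam).filter fun b => L.top b = k).card := by
  rcases Finset.eq_empty_or_nonempty (cells d lam) with he | hne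
  · simp [he]
  · have hT : ((cells d lam).filter fun b => b.2 = 0).Nonempty := by
      obtain ⟨b, hb⟩ := hne
      obtain ⟨h1, h2⟩ := mem_cells.mp hb
      exact ⟨(b.1, 0), Finset.mem_filter.mpr
        ⟨mem_cells.mpr ⟨h1, lt_of_le_of_lt (Nat.zero_le _) h2⟩, rfl⟩⟩
    obtain ⟨b0, hb0, hmax⟩ :=
      Finset.exists_max_image ((cells d lam).filter fun b => b.2 = 0) Prod.fst hT
    obtain ⟨hb0c, hb02⟩ := Finset.mem_filter.mp hb0
    have htc : ∀ j, L.topCountUpTo b0 j = ((cells d lam).filter fun b => L.top b = j).card := by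
      intro j
      unfold SkewBarredTableau.topCountUpTo
      congr 1
      apply Finset.filter_congr
      intro b hb
      constructor
      · rintro ⟨h, -⟩; exact h
      · intro h
        refine ⟨h, ?_⟩
        rcases Nat.eq_zero_or_pos b.2 with hz | hz
        · have hbT : b ∈ (cells d lam).filter fun b => b.2 = 0 :=
            Finset.mem_filter.mpr ⟨hb, hz⟩
          have hle : b.1 ≤ b0.1 := hmax b hbT
          rcases lt_or_eq_of_le hle with hlt | heq
          · exact Or.inl (Or.inr ⟨by omega, hlt⟩)
          · exact Or.inr (Prod.ext heq (by omega))
        · exact Or.inl (Or.inl (by omega))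
    have := hY.1 b0 hb0c k hk
    rwa [htc, htc] at this

lemma countUpTo_anti {d : ℕ} {lam mu : Fin d → ℕ} (L : SkewBarredTableau d lam mu)
    (hY : L.Yamanouchi) {w : ℕ × ℕ} {k : ℕ} (hk : 1 ≤ k) :
    L.countUpTo w (k + 1) ≤ L.countUpTo w k := by
  set S := (cells d mu).filter (fun b => ¬ L.barred b ∧ (revBefore w b ∨ b = w)) with hS
  rcases Finset.eq_empty_or_nonempty S with he | hne
  · have hsub : ∀ j, (cells d mu).filter
        (fun b => ¬ L.barred b ∧ L.bot b = j ∧ (revBefore w b ∨ b = w)) = ∅ := by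
      intro j
      rw [Finset.eq_empty_iff_forall_notMem]
      intro b hb
      rw [Finset.eq_empty_iff_forall_notMem] at he
      apply he b
      rw [Finset.mem_filter] at hb
      exact Finset.mem_filter.mpr ⟨hb.1, hb.2.1, hb.2.2.2⟩
    unfold SkewBarredTableau.countUpTo
    rw [hsub, hsub]
    simpa using top_content_anti L hY hk
  · obtain ⟨bs, hbs, hmax⟩ :=
      Finset.exists_max_image S (fun b => toLex (b.2, d - b.1)) hne
    rw [hS, Finset.mem_filter] at hbs
    obtain ⟨hbsc, hbsnb, hbsw⟩ := hbs
    have hord : ∀ b ∈ S, revBefore bs b ∨ b = bs := by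
      intro b hb
      have h1 := hmax b hb
      have hbc : b.1 < d := (mem_cells.mp (Finset.mem_filter.mp (hS ▸ hb)).1).1
      have hbsc' : bs.1 < d := (mem_cells.mp hbsc).1
      rcases lt_or_eq_of_le h1 with h | h
      · left
        rw [Prod.Lex.lt_iff] at h
        unfold revBefore
        simp only [ofLex_toLex] at h
        omega
      · right
        have h2 := toLex.injective h
        rw [Prod.ext_iff] at h2
        simp only at h2
        exact Prod.ext (by omega) h2.1
    have htrans : ∀ j, L.countUpTo w j = L.countUpTo bs j := by
      intro j
      unfold SkewBarredTableau.countUpTo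
      congr 1
      congr 1
      apply Finset.filter_congr
      intro b hbm
      constructor
      · rintro ⟨hnb, hbv, hrev⟩
        exact ⟨hnb, hbv, hord b (Finset.mem_filter.mpr ⟨hbm, hnb, hrev⟩)⟩
      · rintro ⟨hnb, hbv, hrev⟩
        refine ⟨hnb, hbv, ?_⟩
        rcases hrev with h | h
        · rcases hbsw with h2 | h2
          · exact Or.inl (revBefore_trans h2 h)
          · exact Or.inl (h2 ▸ h)
        · subst h; exact hbsw
    rw [htrans, htrans]
    exact hY.2 bs hbsc hbsnb k hk

lemma countUpTo_anti_of_le {d : ℕ} {lam mu : Fin d → ℕ} (L : SkewBarredTableau d lam mu)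
    (hY : L.Yamanouchi) {w : ℕ × ℕ} {v v' : ℕ} (hv : 1 ≤ v) (hvv : v ≤ v') :
    L.countUpTo w v' ≤ L.countUpTo w v := by
  induction v', hvv using Nat.le_induction with
  | base => exact le_refl _
  | succ n hn ih => exact le_trans (countUpTo_anti L hY (le_trans hv hn)) ih

lemma countUpTo_step {d : ℕ} {lam mu : Fin d → ℕ} (hmu : IsPartitionVec mu)
    (L : SkewBarredTableau d lam mu) {r c : ℕ} (hc : (r, c + 1) ∈ cells d mu) :
    L.countUpTo (r, c + 1) (L.bot (r, c + 1)) =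
      L.countUpTo (r, c) (L.bot (r, c + 1)) + (if L.barred (r, c + 1) then 0 else 1) := by
  set v := L.bot (r, c + 1) with hv
  have hc' : (r, c) ∈ cells d mu := cells_left hc
  have hrow : v ≤ L.bot (r, c) := L.bot_row r c hc
  have key : ∀ b ∈ cells d mu, L.bot b = v →
      ((revBefore (r, c+1) b ∨ b = (r, c+1)) ↔
        (revBefore (r, c) b ∨ b = (r, c) ∨ b = (r, c+1))) := by
    intro b hb hbv
    constructor
    · rintro (h | h)
      · rcases h with h | ⟨h, h'⟩
        · rcases Nat.lt_or_ge b.2 c with h2 | h2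
          · exact Or.inl (Or.inl h2)
          · have hb2 : b.2 = c := by omega
            rcases Nat.lt_trichotomy r b.1 with h3 | h3 | h3
            · exact Or.inl (Or.inr ⟨hb2, h3⟩)
            · exact Or.inr (Or.inl (Prod.ext h3.symm hb2))
            · exfalso
              have hbe : b = (b.1, c) := Prod.ext rfl hb2
              have h4 : L.bot (r, c) < L.bot (b.1, c) := bot_lt_of_row_lt hmu L h3 hc'
              have h5 : L.bot (b.1, c) = v := by rw [← hbe]; exact hbv
              omega
        · exfalso
          have hbe : b = (b.1, c + 1) := Prod.ext rfl h
          have h4 : L.bot (b.1, c + 1) < L.bot (r, c + 1) :=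
            bot_lt_of_row_lt hmu L h' (hbe ▸ hb)
          have h5 : L.bot (b.1, c + 1) = v := by rw [← hbe]; exact hbv
          omega
      · exact Or.inr (Or.inr h)
    · rintro (h | h | h)
      · rcases h with h | ⟨h, -⟩
        · exact Or.inl (Or.inl (by omega))
        · exact Or.inl (Or.inl (by omega))
      · subst h; exact Or.inl (Or.inl (by omega))
      · exact Or.inr h
  have hnmem : ((r, c+1) : ℕ × ℕ) ∉ (cells d mu).filter
      (fun b => ¬ L.barred b ∧ L.bot b = v ∧ (revBefore (r, c) b ∨ b = (r, c))) := by
    intro hm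
    obtain ⟨-, -, -, hrev⟩ := Finset.mem_filter.mp hm
    rcases hrev with h | h
    · unfold revBefore at h; simp only at h; omega
    · rw [Prod.ext_iff] at h; simp only at h; omega
  unfold SkewBarredTableau.countUpTo
  by_cases hb : L.barred (r, c + 1)
  · rw [if_pos hb]
    have hAeq : (cells d mu).filter
        (fun b => ¬ L.barred b ∧ L.bot b = v ∧ (revBefore (r, c+1) b ∨ b = (r, c+1)))
        = (cells d mu).filter
        (fun b => ¬ L.barred b ∧ L.bot b = v ∧ (revBefore (r, c) b ∨ b = (r, c))) := by
      apply Finset.filter_congr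
      intro b hbm
      constructor
      · rintro ⟨hnb, hbv, hrev⟩
        refine ⟨hnb, hbv, ?_⟩
        rcases (key b hbm hbv).mp hrev with h | h | h
        · exact Or.inl h
        · exact Or.inr h
        · exact absurd (h ▸ hb) hnb
      · rintro ⟨hnb, hbv, hrev⟩
        exact ⟨hnb, hbv, (key b hbm hbv).mpr (by tauto)⟩
    rw [hAeq]
    omega
  · rw [if_neg hb]
    have hAeq : (cells d mu).filter
        (fun b => ¬ L.barred b ∧ L.bot b = v ∧ (revBefore (r, c+1) b ∨ b = (r, c+1)))
        = insert ((r, c+1) : ℕ × ℕ) ((cells d mu).filter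
        (fun b => ¬ L.barred b ∧ L.bot b = v ∧ (revBefore (r, c) b ∨ b = (r, c)))) := by
      ext b
      simp only [Finset.mem_filter, Finset.mem_insert]
      constructor
      · rintro ⟨hbm, hnb, hbv, hrev⟩
        rcases (key b hbm hbv).mp hrev with h | h | h
        · exact Or.inr ⟨hbm, hnb, hbv, Or.inl h⟩
        · exact Or.inr ⟨hbm, hnb, hbv, Or.inr h⟩
        · exact Or.inl h
      · rintro (h | ⟨hbm, hnb, hbv, hrev⟩)
        · subst h; exact ⟨hc, hb, hv.symm, Or.inr rfl⟩
        · exact ⟨hbm, hnb, hbv, (key b hbm hbv).mpr (by tauto)⟩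
    rw [hAeq, Finset.card_insert_of_notMem hnmem]
    omega

lemma delta_aux {d : ℕ} {lam mu : Fin d → ℕ} (hmu : IsPartitionVec mu)
    (L : SkewBarredTableau d lam mu) (hY : L.Yamanouchi) :
    ∀ c r : ℕ, (r, c) ∈ cells d mu → L.Δ (r, c) ≤ 0 →
      ∃ b ∈ cells d mu, b.1 = r ∧ L.barred b ∧ L.Δ b = 0 := by
  intro c
  induction c with
  | zero =>
    intro r hm hd
    have hΔ : L.Δ (r, 0) =
        (L.countUpTo (r, 0) (L.bot (r, 0)) : ℤ) - (((0 : ℕ) : ℤ) + 1) + ((r : ℤ) + 1) := rfl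
    by_cases hb : L.barred (r, 0)
    · refine ⟨(r, 0), hm, rfl, hb, ?_⟩
      omega
    · have h1 := one_le_countUpTo L hm hb
      omega
  | succ c ih =>
    intro r hm hd
    have hΔ1 : L.Δ (r, c) =
        (L.countUpTo (r, c) (L.bot (r, c)) : ℤ) - ((c : ℤ) + 1) + ((r : ℤ) + 1) := rfl
    have hΔ2 : L.Δ (r, c + 1) =
        (L.countUpTo (r, c + 1) (L.bot (r, c + 1)) : ℤ)
          - (((c + 1 : ℕ) : ℤ) + 1) + ((r : ℤ) + 1) := rfl
    have hstep := countUpTo_step hmu L hm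
    have hv1 : 1 ≤ L.bot (r, c + 1) := (L.bot_mem _ hm).1
    have hrow : L.bot (r, c + 1) ≤ L.bot (r, c) := L.bot_row r c hm
    have hchain : L.countUpTo (r, c) (L.bot (r, c)) ≤
        L.countUpTo (r, c) (L.bot (r, c + 1)) :=
      countUpTo_anti_of_le L hY hv1 hrow
    by_cases hb : L.barred (r, c + 1)
    · by_cases h0 : L.Δ (r, c + 1) = 0
      · exact ⟨(r, c + 1), hm, rfl, hb, h0⟩
      · rw [if_pos hb] at hstep
        exact ih r (cells_left hm) (by omega)
    · rw [if_neg hb] at hstep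
      exact ih r (cells_left hm) (by omega)

/-- If `Δ(a) ≤ 0` for some cell `a` of `μ`, then there is a barred entry
`b` in the same row as `a` with `Δ(b) = 0`. -/

theorem delta_nonpos_row (d : ℕ) (hd : 1 ≤ d)
    (lam mu nu : Fin d → ℕ)
    (hlam : IsPartitionVec lam) (hmu : IsPartitionVec mu) (hnu : IsPartitionVec nu)
    (L : SkewBarredTableau d lam mu) (hL : L.IsLR nu)
    (a : ℕ × ℕ) (ha : a ∈ cells d mu) (h : L.Δ a ≤ 0) :
    ∃ b ∈ cells d mu, b.1 = a.1 ∧ L.barred b ∧ L.Δ b = 0 := by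
  obtain ⟨r, c⟩ := a
  exact delta_aux hmu L hL.1 c r ha h

end EqLR
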